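/- arXiv:2509.07251 — 2 statements merged into one kernel-verified Lean document; each statement's English description precedes it below -/
import Mathlib

section
/- Let L : H → G be bounded linear, bounded below, with ‖L‖ ≤ 1, let B be strictly positive on G, let γ > 0, and set ω = 1 + ‖B⁻¹‖/γ. Define the resolvent composition L ⊙_γ B = (L ⊡_{1/γ} B⁻¹)⁻¹, where L ⊡_μ C = L* ∘ (C⁻¹ + μ(Id_G − L L*))⁻¹ ∘ L, and the parallel composition L* ▸ B = (L* ∘ B⁻¹ ∘ L)⁻¹. Then L* ▸ B ≼ L ⊙_γ B ≼ ω (L* ▸ B). -/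
open ContinuousLinearMap MeasureTheory

noncomputable section

variable {E : Type*} [NormedAddCommGroup E] [InnerProductSpace ℝ E] [CompleteSpace E]
variable {H G : Type*} [NormedAddCommGroup H] [InnerProductSpace ℝ H] [CompleteSpace H]
  [NormedAddCommGroup G] [InnerProductSpace ℝ G] [CompleteSpace G]

/-- Löwner partial order: `A ≼ B` iff `B - A` is a positive operator. -/
def Loewner (A B : E →L[ℝ] E) : Prop := (B - A).IsPositive

/-- Strictly positive operators: `α • Id ≼ A` for some `α > 0`. -/
def StrictlyPos (A : E →L[ℝ] E) : Prop :=
  IsSelfAdjoint A ∧ ∃ α : ℝ, 0 < α ∧ Loewner (α • (1 : E →L[ℝ] E)) A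

/-- Bounded below linear operator. -/
def BoundedBelow (L : H →L[ℝ] G) : Prop := ∃ β : ℝ, 0 < β ∧ ∀ x : H, β * ‖x‖ ≤ ‖L x‖

/-- Resolvent cocomposition `L ⊡_γ B = L* ∘ (B⁻¹ + γ(Id − L L*))⁻¹ ∘ L`. -/
def rcc (L : H →L[ℝ] G) (γ : ℝ) (B : G →L[ℝ] G) : H →L[ℝ] H :=
  (adjoint L) ∘L (Ring.inverse (Ring.inverse B + γ • ((1 : G →L[ℝ] G) - L ∘L adjoint L))) ∘L L

/-- Resolvent composition `L ⊙_γ B = (L ⊡_{1/γ} B⁻¹)⁻¹`. -/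
def rc (L : H →L[ℝ] G) (γ : ℝ) (B : G →L[ℝ] G) : H →L[ℝ] H :=
  Ring.inverse (rcc L (1/γ) (Ring.inverse B))

/-- Parallel composition `L* ▸ B = (L* ∘ B⁻¹ ∘ L)⁻¹`. -/
def parallelComp (L : H →L[ℝ] G) (B : G →L[ℝ] G) : H →L[ℝ] H :=
  Ring.inverse ((adjoint L) ∘L (Ring.inverse B) ∘L L)

/-- `g(A,B) = inf {λ > 0 : A ≼ λ B}`. -/
def gThomp (A B : E →L[ℝ] E) : ℝ := sInf {l : ℝ | 0 < l ∧ Loewner A (l • B)}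

/-- Thompson metric. -/
def dThomp (A B : E →L[ℝ] E) : ℝ := Real.log (max (gThomp A B) (gThomp B A))

/-- The (unique) positive square root of a positive operator. -/
def opSqrt (A : E →L[ℝ] E) : E →L[ℝ] E :=
  letI := Classical.propDecidable
  if h : ∃ S : E →L[ℝ] E, S.IsPositive ∧ S * S = A then h.choose else 0

/-- Real power `A^t` of a strictly positive operator, `t ∈ (0,1)`, via the
Balakrishnan integral formula `A^t = (sin (π t)/π) ∫₀^∞ s^{t-1} A (A + s)⁻¹ ds`. -/
def opRpow (A : E →L[ℝ] E) (t : ℝ) : E →L[ℝ] E :=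
  (Real.sin (Real.pi * t) / Real.pi) •
    ∫ s in Set.Ioi (0 : ℝ), s ^ (t - 1) • (A * Ring.inverse (A + s • (1 : E →L[ℝ] E)))

/-- Geometric mean `A # B = A^{1/2} (A^{-1/2} B A^{-1/2})^{1/2} A^{1/2}`. -/
def geomMean (A B : E →L[ℝ] E) : E →L[ℝ] E :=
  opSqrt A * opSqrt (Ring.inverse (opSqrt A) * B * Ring.inverse (opSqrt A)) * opSqrt A

/-- `t`-weighted geometric mean `A #_t B = A^{1/2} (A^{-1/2} B A^{-1/2})^t A^{1/2}`. -/
def wGeomMean (t : ℝ) (A B : E →L[ℝ] E) : E →L[ℝ] E :=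
  opSqrt A * opRpow (Ring.inverse (opSqrt A) * B * Ring.inverse (opSqrt A)) t * opSqrt A

open scoped RealInnerProductSpace

set_option maxHeartbeats 1000000
set_option synthInstance.maxHeartbeats 400000

lemma ipos_inner {A : E →L[ℝ] E} (h : A.IsPositive) (x : E) : 0 ≤ ⟪A x, x⟫ := h.2 x

lemma ipos_of {A : E →L[ℝ] E} (hsa : IsSelfAdjoint A) (h : ∀ x, 0 ≤ ⟪A x, x⟫) :
    A.IsPositive := ⟨isSelfAdjoint_iff_isSymmetric.mp hsa, h⟩

lemma loewner_inner {A B : E →L[ℝ] E} (h : Loewner A B) (x : E) : ⟪A x, x⟫ ≤ ⟪B x, x⟫ := by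
  have h2 : 0 ≤ ⟪(B - A) x, x⟫ := h.2 x
  rw [ContinuousLinearMap.sub_apply, inner_sub_left] at h2
  linarith

lemma loewner_of_inner {A B : E →L[ℝ] E} (hsa : IsSelfAdjoint (B - A))
    (h : ∀ x, ⟪A x, x⟫ ≤ ⟪B x, x⟫) : Loewner A B := by
  refine ⟨isSelfAdjoint_iff_isSymmetric.mp hsa, fun x => ?_⟩
  show 0 ≤ ⟪(B - A) x, x⟫
  rw [ContinuousLinearMap.sub_apply, inner_sub_left]
  linarith [h x]

lemma loewner_trans {A B C : E →L[ℝ] E} (h1 : Loewner A B) (h2 : Loewner B C) :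
    Loewner A C := by
  have h3 := ContinuousLinearMap.IsPositive.add h2 h1
  have : C - B + (B - A) = C - A := by abel
  rwa [this] at h3

lemma inner_smul_one (c : ℝ) (x : E) : ⟪(c • (1 : E →L[ℝ] E)) x, x⟫ = c * ‖x‖ ^ 2 := by
  simp [real_inner_smul_left, real_inner_self_eq_norm_sq]

lemma sa_sym {A : E →L[ℝ] E} (h : IsSelfAdjoint A) (x y : E) : ⟪A x, y⟫ = ⟪A y, x⟫ := by
  have h1 : ⟪A x, y⟫ = ⟪x, A y⟫ := (isSelfAdjoint_iff_isSymmetric.mp h) x y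
  rw [h1, real_inner_comm]

lemma my_cs {A : E →L[ℝ] E} (hA : A.IsPositive) (x y : E) :
    ⟪A x, y⟫ ^ 2 ≤ ⟪A x, x⟫ * ⟪A y, y⟫ := by
  have key : ∀ t : ℝ, 0 ≤ ⟪A y, y⟫ * (t * t) + (2 * ⟪A x, y⟫) * t + ⟪A x, x⟫ := by
    intro t
    have h0 : 0 ≤ ⟪A (x + t • y), x + t • y⟫ := ipos_inner hA _
    have hyx : ⟪A y, x⟫ = ⟪A x, y⟫ := sa_sym hA.isSelfAdjoint y x
    have hexp : A (x + t • y) = A x + t • A y := by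
      rw [map_add, ContinuousLinearMap.map_smul]
    rw [hexp] at h0
    simp only [inner_add_left, inner_add_right, real_inner_smul_left,
      real_inner_smul_right] at h0
    rw [hyx] at h0
    nlinarith [h0]
  have hd := discrim_le_zero key
  rw [discrim] at hd
  nlinarith [hd]

lemma StrictlyPos.isPositive' {A : E →L[ℝ] E} (hA : StrictlyPos A) : A.IsPositive := by
  obtain ⟨hsa, α, hα, hb⟩ := hA
  refine ipos_of hsa fun x => ?_
  have h1 := loewner_inner hb x
  rw [inner_smul_one] at h1
  nlinarith [sq_nonneg ‖x‖]

lemma strictlyPos_isUnit {A : E →L[ℝ] E} (hA : StrictlyPos A) : IsUnit A := by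
  obtain ⟨hsa, α, hα, hb⟩ := hA
  refine isUnit_of_forall_le_norm_inner_map A (c := ⟨α, hα.le⟩) (by exact_mod_cast hα)
    fun x => ?_
  have h1 := loewner_inner hb x
  rw [inner_smul_one] at h1
  have : ⟪A x, x⟫ ≤ ‖⟪A x, x⟫‖ := by
    rw [Real.norm_eq_abs]; exact le_abs_self _
  push_cast
  show ‖x‖ ^ 2 * α ≤ ‖⟪A x, x⟫‖
  nlinarith

lemma ring_inverse_eq_of {A C : E →L[ℝ] E} (hu : IsUnit A) (h1 : A * C = 1) :
    Ring.inverse A = C := by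
  have h2 := Ring.inverse_mul_cancel A hu
  calc Ring.inverse A = Ring.inverse A * (A * C) := by rw [h1, mul_one]
    _ = (Ring.inverse A * A) * C := by rw [mul_assoc]
    _ = C := by rw [h2, one_mul]

lemma ring_inverse_inverse {A : E →L[ℝ] E} (hu : IsUnit A) :
    Ring.inverse (Ring.inverse A) = A := by
  have h2 := Ring.inverse_mul_cancel A hu
  exact ring_inverse_eq_of (isUnit_ringInverse.mpr hu) h2

lemma ring_inverse_smul {B : E →L[ℝ] E} (hu : IsUnit B) {c : ℝ} (hc : c ≠ 0) :
    Ring.inverse (c • B) = c⁻¹ • Ring.inverse B := by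
  have h1 : (c • B) * (c⁻¹ • Ring.inverse B) = 1 := by
    rw [smul_mul_assoc, mul_smul_comm, smul_smul, mul_inv_cancel₀ hc,
      Ring.mul_inverse_cancel B hu, one_smul]
  have h2 : (c⁻¹ • Ring.inverse B) * (c • B) = 1 := by
    rw [smul_mul_assoc, mul_smul_comm, smul_smul, inv_mul_cancel₀ hc,
      Ring.inverse_mul_cancel B hu, one_smul]
  exact ring_inverse_eq_of (isUnit_iff_exists.mpr ⟨_, h1, h2⟩) h1

lemma isSelfAdjoint_ring_inverse {A : E →L[ℝ] E} (hu : IsUnit A) (hsa : IsSelfAdjoint A) :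
    IsSelfAdjoint (Ring.inverse A) := by
  have h1 : A * Ring.inverse A = 1 := Ring.mul_inverse_cancel A hu
  have h3 : star (Ring.inverse A) * A = 1 := by
    calc star (Ring.inverse A) * A = star (Ring.inverse A) * star A := by rw [hsa.star_eq]
      _ = star (A * Ring.inverse A) := (star_mul _ _).symm
      _ = 1 := by rw [h1, star_one]
  show star (Ring.inverse A) = Ring.inverse A
  calc star (Ring.inverse A) = star (Ring.inverse A) * (A * Ring.inverse A) := by
        rw [h1, mul_one]
    _ = (star (Ring.inverse A) * A) * Ring.inverse A := by rw [mul_assoc]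
    _ = Ring.inverse A := by rw [h3, one_mul]

lemma sa_smul {A : E →L[ℝ] E} (h : IsSelfAdjoint A) (c : ℝ) : IsSelfAdjoint (c • A) := by
  show star (c • A) = c • A
  rw [star_smul, star_trivial, h.star_eq]

lemma ipos_smul {A : E →L[ℝ] E} (h : A.IsPositive) {c : ℝ} (hc : 0 ≤ c) :
    (c • A).IsPositive := by
  refine ipos_of (sa_smul h.isSelfAdjoint c) fun x => ?_
  rw [ContinuousLinearMap.smul_apply, real_inner_smul_left]
  exact mul_nonneg hc (ipos_inner h x)

lemma loewner_smul {A B : E →L[ℝ] E} (h : Loewner A B) {c : ℝ} (hc : 0 ≤ c) :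
    Loewner (c • A) (c • B) := by
  have h2 := ipos_smul h hc
  rwa [smul_sub] at h2

lemma strictlyPos_smul {c : ℝ} (hc : 0 < c) {A : E →L[ℝ] E} (hA : StrictlyPos A) :
    StrictlyPos (c • A) := by
  obtain ⟨hsa, α, hα, hb⟩ := hA
  refine ⟨sa_smul hsa c, c * α, by positivity, ?_⟩
  have h2 := loewner_smul hb hc.le
  rwa [smul_smul] at h2

lemma strictlyPos_add_isPositive {A B : E →L[ℝ] E} (hA : StrictlyPos A) (hB : B.IsPositive) :
    StrictlyPos (A + B) := by
  obtain ⟨hsa, α, hα, hb⟩ := hA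
  refine ⟨hsa.add hB.isSelfAdjoint, α, hα, ?_⟩
  have h2 := ContinuousLinearMap.IsPositive.add hb hB
  have he : A - α • (1 : E →L[ℝ] E) + B = A + B - α • (1 : E →L[ℝ] E) := by abel
  rwa [he] at h2

lemma strictlyPos_ring_inverse {A : E →L[ℝ] E} (hA : StrictlyPos A) :
    StrictlyPos (Ring.inverse A) := by
  have hu := strictlyPos_isUnit hA
  obtain ⟨hsa, α, hα, hb⟩ := hA
  have hsa' := isSelfAdjoint_ring_inverse hu hsa
  refine ⟨hsa', α / (‖A‖ ^ 2 + 1), by positivity, ?_⟩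
  apply loewner_of_inner
    (hsa'.sub (sa_smul (IsSelfAdjoint.one _) _))
  intro x
  rw [inner_smul_one]
  have hx : A (Ring.inverse A x) = x := by
    have h1 := DFunLike.congr_fun (Ring.mul_inverse_cancel A hu) x
    simpa [ContinuousLinearMap.mul_apply] using h1
  set u := Ring.inverse A x with huset
  have hAu : α * ‖u‖ ^ 2 ≤ ⟪A u, u⟫ := by
    have h1 := loewner_inner hb u
    rwa [inner_smul_one] at h1
  have hinner : ⟪u, x⟫ = ⟪A u, u⟫ := by
    rw [← hx, sa_sym hsa u u]
    exact real_inner_comm _ _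
  have hxu : ‖x‖ ≤ ‖A‖ * ‖u‖ := by rw [← hx]; exact le_opNorm A u
  have hD : (0:ℝ) < ‖A‖ ^ 2 + 1 := by positivity
  have hx2 : ‖x‖ ^ 2 ≤ (‖A‖ ^ 2 + 1) * ‖u‖ ^ 2 := by
    nlinarith [norm_nonneg x, norm_nonneg u, norm_nonneg A, sq_nonneg ‖u‖]
  have hkey : α / (‖A‖ ^ 2 + 1) * ‖x‖ ^ 2 ≤ α * ‖u‖ ^ 2 := by
    have h5 := mul_le_mul_of_nonneg_left hx2 (div_pos hα hD).le
    have h6 : α / (‖A‖ ^ 2 + 1) * ((‖A‖ ^ 2 + 1) * ‖u‖ ^ 2) = α * ‖u‖ ^ 2 := by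
      field_simp
    linarith
  calc α / (‖A‖ ^ 2 + 1) * ‖x‖ ^ 2 ≤ α * ‖u‖ ^ 2 := hkey
    _ ≤ ⟪A u, u⟫ := hAu
    _ = ⟪u, x⟫ := hinner.symm

lemma loewner_inverse_antitone {A B : E →L[ℝ] E} (hA : StrictlyPos A) (hB : StrictlyPos B)
    (h : Loewner A B) : Loewner (Ring.inverse B) (Ring.inverse A) := by
  have huA := strictlyPos_isUnit hA
  have huB := strictlyPos_isUnit hB
  have hAinv := strictlyPos_ring_inverse hA
  have hBinv := strictlyPos_ring_inverse hB
  apply loewner_of_inner (hAinv.1.sub hBinv.1)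
  intro x
  have hBu : B (Ring.inverse B x) = x := by
    have h1 := DFunLike.congr_fun (Ring.mul_inverse_cancel B huB) x
    simpa [ContinuousLinearMap.mul_apply] using h1
  have hAv : A (Ring.inverse A x) = x := by
    have h1 := DFunLike.congr_fun (Ring.mul_inverse_cancel A huA) x
    simpa [ContinuousLinearMap.mul_apply] using h1
  set u := Ring.inverse B x with hu
  set v := Ring.inverse A x with hv
  have hApos := hA.isPositive'
  have cs := my_cs hApos u v
  have e1 : ⟪A u, v⟫ = ⟪u, x⟫ := by
    rw [sa_sym hA.1 u v, hAv]
    exact real_inner_comm _ _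
  have e2 : ⟪A v, v⟫ = ⟪v, x⟫ := by
    rw [hAv]
    exact real_inner_comm _ _
  have e3 : ⟪A u, u⟫ ≤ ⟪u, x⟫ := by
    have h1 := loewner_inner h u
    rw [hBu] at h1
    calc ⟪A u, u⟫ ≤ ⟪x, u⟫ := h1
      _ = ⟪u, x⟫ := real_inner_comm _ _
  have ht : 0 ≤ ⟪u, x⟫ := ipos_inner hBinv.isPositive' x
  have hs : 0 ≤ ⟪v, x⟫ := ipos_inner hAinv.isPositive' x
  have hAuu : 0 ≤ ⟪A u, u⟫ := ipos_inner hApos u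
  show ⟪u, x⟫ ≤ ⟪v, x⟫
  rw [e1, e2] at cs
  have h7 : ⟪u, x⟫ ^ 2 ≤ ⟪u, x⟫ * ⟪v, x⟫ :=
    le_trans cs (mul_le_mul_of_nonneg_right e3 hs)
  nlinarith [h7, ht, hs]

lemma loewner_conj {L : H →L[ℝ] G} {A B : G →L[ℝ] G} (h : Loewner A B) :
    Loewner (adjoint L ∘L A ∘L L) (adjoint L ∘L B ∘L L) := by
  have h1 := ContinuousLinearMap.IsPositive.adjoint_conj h L
  have he : adjoint L ∘L (B - A) ∘L L
      = adjoint L ∘L B ∘L L - adjoint L ∘L A ∘L L := by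
    ext x
    simp [ContinuousLinearMap.sub_apply, ContinuousLinearMap.comp_apply, map_sub]
  rwa [he] at h1

lemma strictlyPos_conj {L : H →L[ℝ] G} (hL : BoundedBelow L) {A : G →L[ℝ] G}
    (hA : StrictlyPos A) : StrictlyPos (adjoint L ∘L A ∘L L) := by
  obtain ⟨β, hβ, hLb⟩ := hL
  obtain ⟨hsa, α, hα, hb⟩ := hA
  refine ⟨hsa.adjoint_conj L, α * β ^ 2, by positivity, ?_⟩
  apply loewner_of_inner
    ((hsa.adjoint_conj L).sub (sa_smul (IsSelfAdjoint.one _) _))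
  intro x
  rw [inner_smul_one]
  have h1 : α * ‖L x‖ ^ 2 ≤ ⟪A (L x), L x⟫ := by
    have h2 := loewner_inner hb (L x)
    rwa [inner_smul_one] at h2
  have h2 := hLb x
  have h3 : ⟪(adjoint L ∘L A ∘L L) x, x⟫ = ⟪A (L x), L x⟫ := by
    rw [ContinuousLinearMap.comp_apply, ContinuousLinearMap.comp_apply, adjoint_inner_left]
  rw [h3]
  have h4 : β ^ 2 * ‖x‖ ^ 2 ≤ ‖L x‖ ^ 2 := by
    have h5 := pow_le_pow_left₀ (by positivity : (0:ℝ) ≤ β * ‖x‖) h2 2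
    nlinarith [h5]
  nlinarith [h4, mul_le_mul_of_nonneg_left h4 hα.le]

lemma LLstar_pos (L : H →L[ℝ] G) : (L ∘L adjoint L).IsPositive := by
  refine ipos_of ?_ fun x => ?_
  · have h1 := ((IsSelfAdjoint.one _)).conj_adjoint L
    simpa [ContinuousLinearMap.one_def, ContinuousLinearMap.id_comp] using h1
  · rw [ContinuousLinearMap.comp_apply]
    have : ⟪L (adjoint L x), x⟫ = ⟪adjoint L x, adjoint L x⟫ := by
      rw [← adjoint_inner_right]
    rw [this]
    exact real_inner_self_nonneg

lemma one_sub_LLstar_pos {L : H →L[ℝ] G} (hL1 : ‖L‖ ≤ 1) :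
    ((1 : G →L[ℝ] G) - L ∘L adjoint L).IsPositive := by
  refine ipos_of (((IsSelfAdjoint.one _)).sub (LLstar_pos L).isSelfAdjoint) fun x => ?_
  rw [ContinuousLinearMap.sub_apply, inner_sub_left, ContinuousLinearMap.one_apply]
  have h1 : ⟪(L ∘L adjoint L) x, x⟫ = ‖adjoint L x‖ ^ 2 := by
    rw [ContinuousLinearMap.comp_apply, ← adjoint_inner_right,
      real_inner_self_eq_norm_sq]
  have h2 : ‖adjoint L x‖ ≤ ‖x‖ := by
    have h3 : ‖adjoint L x‖ ≤ ‖adjoint L‖ * ‖x‖ := le_opNorm _ x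
    have h4 : ‖adjoint L‖ = ‖L‖ := adjoint.norm_map L
    nlinarith [norm_nonneg x]
  rw [h1, real_inner_self_eq_norm_sq]
  nlinarith [norm_nonneg (adjoint L x), norm_nonneg x]

lemma one_loewner_norm_smul {B : G →L[ℝ] G} (hB : StrictlyPos B) :
    Loewner (1 : G →L[ℝ] G) (‖Ring.inverse B‖ • B) := by
  have huB := strictlyPos_isUnit hB
  have hpos := hB.isPositive'
  apply loewner_of_inner
    ((sa_smul hB.1 _).sub (IsSelfAdjoint.one _))
  intro x
  rw [ContinuousLinearMap.one_apply, ContinuousLinearMap.smul_apply, real_inner_smul_left,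
    real_inner_self_eq_norm_sq]
  have hBu : B (Ring.inverse B x) = x := by
    have h1 := DFunLike.congr_fun (Ring.mul_inverse_cancel B huB) x
    simpa [ContinuousLinearMap.mul_apply] using h1
  set u := Ring.inverse B x with hu
  have cs := my_cs hpos u x
  rw [hBu] at cs
  have h1 : ⟪x, u⟫ ≤ ‖Ring.inverse B‖ * ‖x‖ ^ 2 := by
    calc ⟪x, u⟫ ≤ ‖x‖ * ‖u‖ := real_inner_le_norm _ _
      _ ≤ ‖x‖ * (‖Ring.inverse B‖ * ‖x‖) := by
          refine mul_le_mul_of_nonneg_left ?_ (norm_nonneg x)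
          exact le_opNorm _ x
      _ = ‖Ring.inverse B‖ * ‖x‖ ^ 2 := by ring
  have h2 : ⟪x, x⟫ = ‖x‖ ^ 2 := real_inner_self_eq_norm_sq x
  have h3 : 0 ≤ ⟪B x, x⟫ := ipos_inner hpos x
  rw [h2] at cs
  by_cases hx : x = 0
  · simp [hx]
  · have hx' : 0 < ‖x‖ := norm_pos_iff.mpr hx
    nlinarith [cs, h1, h3, sq_nonneg ‖x‖, mul_pos hx' hx']


theorem rc_sandwich (L : H →L[ℝ] G) (hL : BoundedBelow L) (hL1 : ‖L‖ ≤ 1)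
    (B : G →L[ℝ] G) (hB : StrictlyPos B) (γ : ℝ) (hγ : 0 < γ) :
    Loewner (parallelComp L B) (rc L γ B) ∧
      Loewner (rc L γ B) ((1 + ‖Ring.inverse B‖ / γ) • parallelComp L B) := by
  have huB : IsUnit B := strictlyPos_isUnit hB
  have hγ' : (0:ℝ) < 1/γ := by positivity
  set P : G →L[ℝ] G := (1 : G →L[ℝ] G) - L ∘L adjoint L with hP
  have hPpos : P.IsPositive := one_sub_LLstar_pos hL1
  set M : G →L[ℝ] G := B + (1/γ) • P with hM
  have hMsp : StrictlyPos M := strictlyPos_add_isPositive hB (ipos_smul hPpos hγ'.le)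
  have huM : IsUnit M := strictlyPos_isUnit hMsp
  have hBinv_sp : StrictlyPos (Ring.inverse B) := strictlyPos_ring_inverse hB
  have hMinv_sp : StrictlyPos (Ring.inverse M) := strictlyPos_ring_inverse hMsp
  set T : H →L[ℝ] H := adjoint L ∘L Ring.inverse B ∘L L with hT
  set S : H →L[ℝ] H := adjoint L ∘L Ring.inverse M ∘L L with hS
  have hTsp : StrictlyPos T := strictlyPos_conj hL hBinv_sp
  have hSsp : StrictlyPos S := strictlyPos_conj hL hMinv_sp
  have hSrcc : rcc L (1/γ) (Ring.inverse B) = S := by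
    rw [rcc, ring_inverse_inverse huB, hS, hM, hP]
  have hrc : rc L γ B = Ring.inverse S := by rw [rc, hSrcc]
  have hpc : parallelComp L B = Ring.inverse T := by rw [parallelComp, hT]
  -- part 1
  have hBM : Loewner B M := by
    show (M - B).IsPositive
    have he : M - B = (1/γ) • P := by rw [hM]; abel
    rw [he]
    exact ipos_smul hPpos hγ'.le
  have h1 : Loewner (Ring.inverse M) (Ring.inverse B) :=
    loewner_inverse_antitone hB hMsp hBM
  have h2 : Loewner S T := by
    rw [hS, hT]; exact loewner_conj h1
  have part1 : Loewner (Ring.inverse T) (Ring.inverse S) :=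
    loewner_inverse_antitone hSsp hTsp h2
  -- part 2
  set ω : ℝ := 1 + ‖Ring.inverse B‖ / γ with hω
  have hω0 : (0:ℝ) < ω := by
    have hn : (0:ℝ) ≤ ‖Ring.inverse B‖ / γ := by positivity
    rw [hω]; linarith
  have hP1 : Loewner P (1 : G →L[ℝ] G) := by
    show ((1 : G →L[ℝ] G) - P).IsPositive
    rw [hP, sub_sub_cancel]
    exact LLstar_pos L
  have hone : Loewner (1 : G →L[ℝ] G) (‖Ring.inverse B‖ • B) := one_loewner_norm_smul hB
  have hPB : Loewner P (‖Ring.inverse B‖ • B) := loewner_trans hP1 hone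
  have hMωB : Loewner M (ω • B) := by
    show (ω • B - M).IsPositive
    have he : ω • B - M = (1/γ) • (‖Ring.inverse B‖ • B - P) := by
      rw [hω, hM]
      match_scalars <;> field_simp <;> ring
    rw [he]
    exact ipos_smul hPB hγ'.le
  have hωB_sp : StrictlyPos (ω • B) := strictlyPos_smul hω0 hB
  have h3 : Loewner (Ring.inverse (ω • B)) (Ring.inverse M) :=
    loewner_inverse_antitone hMsp hωB_sp hMωB
  rw [ring_inverse_smul huB hω0.ne'] at h3
  have h4 : Loewner (adjoint L ∘L (ω⁻¹ • Ring.inverse B) ∘L L) S := by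
    rw [hS]; exact loewner_conj h3
  have he2 : adjoint L ∘L (ω⁻¹ • Ring.inverse B) ∘L L = ω⁻¹ • T := by
    rw [hT]
    ext x
    simp [ContinuousLinearMap.comp_apply, ContinuousLinearMap.smul_apply]
  rw [he2] at h4
  have hωT_sp : StrictlyPos (ω⁻¹ • T) := strictlyPos_smul (by positivity) hTsp
  have h5 : Loewner (Ring.inverse S) (Ring.inverse (ω⁻¹ • T)) :=
    loewner_inverse_antitone hωT_sp hSsp h4
  rw [ring_inverse_smul (strictlyPos_isUnit hTsp) (inv_ne_zero hω0.ne'), inv_inv] at h5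
  constructor
  · rw [hpc, hrc]; exact part1
  · rw [hpc, hrc]; exact h5

end
end

section
/- Let L : H → G be bounded linear with 0 < ‖L‖ ≤ 1, let γ > 0, let ρ ≥ 1, and let B be strictly positive on G. Then L ⊡_γ (ρB) = ρ(L ⊡_{γρ} B) ≼ ρ(L ⊡_γ B), where L ⊡_γ B = L* ∘ (B⁻¹ + γ(Id_G − L L*))⁻¹ ∘ L. -/
open ContinuousLinearMap MeasureTheory
open scoped RealInnerProductSpace

noncomputable section

variable {E : Type*} [NormedAddCommGroup E] [InnerProductSpace ℝ E] [CompleteSpace E]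
variable {H G : Type*} [NormedAddCommGroup H] [InnerProductSpace ℝ H] [CompleteSpace H]
  [NormedAddCommGroup G] [InnerProductSpace ℝ G] [CompleteSpace G]

lemma myRingInverseEq {R : Type*} [Ring R] {a b : R} (h1 : a * b = 1) (h2 : b * a = 1) :
    Ring.inverse a = b := by
  have hu : IsUnit a := ⟨⟨a, b, h1, h2⟩, rfl⟩
  calc Ring.inverse a = Ring.inverse a * (a * b) := by rw [h1, mul_one]
  _ = b := Ring.inverse_mul_cancel_left _ _ hu

lemma isPositive_iff_real (T : E →L[ℝ] E) :
    T.IsPositive ↔ IsSelfAdjoint T ∧ ∀ x, 0 ≤ ⟪T x, x⟫ := by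
  simp [ContinuousLinearMap.IsPositive, ContinuousLinearMap.reApplyInnerSelf,
    ContinuousLinearMap.isSelfAdjoint_iff_isSymmetric]

lemma sp_inner {B : E →L[ℝ] E} (hB : StrictlyPos B) :
    ∃ α : ℝ, 0 < α ∧ ∀ x, α * ‖x‖ ^ 2 ≤ ⟪B x, x⟫ := by
  obtain ⟨hsa, α, hα, hpos⟩ := hB
  refine ⟨α, hα, fun x => ?_⟩
  have h := ((isPositive_iff_real _).mp hpos).2 x
  simp only [ContinuousLinearMap.sub_apply, ContinuousLinearMap.smul_apply,
    ContinuousLinearMap.one_apply, inner_sub_left, real_inner_smul_left] at h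
  rw [real_inner_self_eq_norm_sq] at h
  linarith

lemma sp_isPositive {B : E →L[ℝ] E} (hB : StrictlyPos B) : B.IsPositive := by
  obtain ⟨α, hα, h⟩ := sp_inner hB
  refine (isPositive_iff_real _).mpr ⟨hB.1, fun x => ?_⟩
  have := h x
  nlinarith [sq_nonneg ‖x‖]

lemma sp_isUnit {B : E →L[ℝ] E} (hB : StrictlyPos B) : IsUnit B := by
  obtain ⟨α, hα, h⟩ := sp_inner hB
  exact isUnit_of_forall_le_norm_inner_map B (c := ⟨α, hα.le⟩) (by exact_mod_cast hα)
    (fun x => by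
      refine le_trans ?_ (le_abs_self _)
      calc ‖x‖ ^ 2 * α = α * ‖x‖ ^ 2 := by ring
      _ ≤ ⟪B x, x⟫ := h x)

lemma loewner_smul_pos {A B : E →L[ℝ] E} (c : ℝ) (hc : 0 ≤ c) (h : Loewner A B) :
    Loewner (c • A) (c • B) := by
  have : c • B - c • A = c • (B - A) := by rw [smul_sub]
  rw [Loewner, this]
  refine (isPositive_iff_real _).mpr ⟨?_, fun x => ?_⟩
  · exact (IsSelfAdjoint.all c).smul (ContinuousLinearMap.IsPositive.isSelfAdjoint h)
  · simp only [ContinuousLinearMap.smul_apply, real_inner_smul_left]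
    exact mul_nonneg hc (((isPositive_iff_real _).mp h).2 x)

lemma isPositive_smul_real {A : E →L[ℝ] E} (c : ℝ) (hc : 0 ≤ c) (h : A.IsPositive) :
    (c • A).IsPositive := by
  refine (isPositive_iff_real _).mpr ⟨(IsSelfAdjoint.all c).smul h.isSelfAdjoint, fun x => ?_⟩
  simp only [ContinuousLinearMap.smul_apply, real_inner_smul_left]
  exact mul_nonneg hc (((isPositive_iff_real _).mp h).2 x)

lemma sp_add_pos {A P : E →L[ℝ] E} (hA : StrictlyPos A) (hP : P.IsPositive) :
    StrictlyPos (A + P) := by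
  obtain ⟨hsa, α, hα, hpos⟩ := hA
  refine ⟨hsa.add hP.isSelfAdjoint, α, hα, ?_⟩
  have : A + P - α • (1 : E →L[ℝ] E) = (A - α • 1) + P := by abel
  rw [Loewner, this]
  exact hpos.add hP

lemma sp_ring_inverse {B : E →L[ℝ] E} (hB : StrictlyPos B) : StrictlyPos (Ring.inverse B) := by
  obtain ⟨α, hα, h⟩ := sp_inner hB
  have hu := sp_isUnit hB
  have hBi : B * Ring.inverse B = 1 := Ring.mul_inverse_cancel _ hu
  have hsa : IsSelfAdjoint (Ring.inverse B) := by
    rw [IsSelfAdjoint, ← Ring.inverse_star, hB.1.star_eq]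
  set m : ℝ := max ‖B‖ 1 with hm
  have hm1 : 0 < m := lt_of_lt_of_le one_pos (le_max_right _ _)
  have key : ∀ x : E, (α / m ^ 2) * ‖x‖ ^ 2 ≤ ⟪Ring.inverse B x, x⟫ := by
    intro x
    have hx : B (Ring.inverse B x) = x := by
      have := congrArg (fun T : E →L[ℝ] E => T x) hBi
      simpa using this
    have h1 : α * ‖Ring.inverse B x‖ ^ 2 ≤ ⟪Ring.inverse B x, x⟫ := by
      have := h (Ring.inverse B x)
      rw [hx] at this
      rwa [real_inner_comm] at this
    have h2 : ‖x‖ ≤ m * ‖Ring.inverse B x‖ := by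
      calc ‖x‖ = ‖B (Ring.inverse B x)‖ := by rw [hx]
      _ ≤ ‖B‖ * ‖Ring.inverse B x‖ := B.le_opNorm _
      _ ≤ m * ‖Ring.inverse B x‖ := by
          exact mul_le_mul_of_nonneg_right (le_max_left _ _) (norm_nonneg _)
    have h3 : ‖x‖ ^ 2 ≤ m ^ 2 * ‖Ring.inverse B x‖ ^ 2 := by nlinarith [norm_nonneg x]
    calc (α / m ^ 2) * ‖x‖ ^ 2 ≤ (α / m ^ 2) * (m ^ 2 * ‖Ring.inverse B x‖ ^ 2) := by
          exact mul_le_mul_of_nonneg_left h3 (by positivity)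
    _ = α * ‖Ring.inverse B x‖ ^ 2 := by field_simp
    _ ≤ _ := h1
  refine ⟨hsa, α / m ^ 2, by positivity, ?_⟩
  refine (isPositive_iff_real _).mpr ⟨?_, fun x => ?_⟩
  · exact hsa.sub ((IsSelfAdjoint.all _).smul (IsSelfAdjoint.one _))
  · simp only [ContinuousLinearMap.sub_apply, ContinuousLinearMap.smul_apply,
      ContinuousLinearMap.one_apply, inner_sub_left, real_inner_smul_left,
      real_inner_self_eq_norm_sq]
    have := key x
    nlinarith [this]

lemma pos_cauchy_schwarz {T : E →L[ℝ] E} (hT : T.IsPositive) (x y : E) :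
    ⟪T x, y⟫ ^ 2 ≤ ⟪T x, x⟫ * ⟪T y, y⟫ := by
  have hsym : ∀ u v : E, ⟪T u, v⟫ = ⟪T v, u⟫ := by
    intro u v
    nth_rewrite 1 [← hT.isSelfAdjoint.adjoint_eq]
    rw [ContinuousLinearMap.adjoint_inner_left]
    exact real_inner_comm _ _
  have hpos := ((isPositive_iff_real _).mp hT).2
  have hquad : ∀ l : ℝ, 0 ≤ ⟪T y, y⟫ * (l * l) + (2 * ⟪T x, y⟫) * l + ⟪T x, x⟫ := by
    intro l
    have h0 := hpos (x + l • y)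
    have : ⟪T (x + l • y), x + l • y⟫ =
        ⟪T y, y⟫ * (l * l) + (2 * ⟪T x, y⟫) * l + ⟪T x, x⟫ := by
      simp only [map_add, ContinuousLinearMap.map_smul, inner_add_left, inner_add_right,
        real_inner_smul_left, real_inner_smul_right]
      rw [hsym y x]
      ring
    rw [this] at h0
    exact h0
  have hd := discrim_le_zero hquad
  rw [discrim] at hd
  nlinarith [hd]

lemma inv_anti {A C : E →L[ℝ] E} (hA : StrictlyPos A) (hC : StrictlyPos C)
    (h : Loewner A C) : Loewner (Ring.inverse C) (Ring.inverse A) := by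
  have hAu := sp_isUnit hA
  have hCu := sp_isUnit hC
  have hAi := sp_ring_inverse hA
  have hCi := sp_ring_inverse hC
  have hApos := sp_isPositive hA
  refine (isPositive_iff_real _).mpr ⟨hAi.1.sub hCi.1, fun x => ?_⟩
  set u := Ring.inverse C x with hu
  set v := Ring.inverse A x with hv
  have hCu' : C u = x := by
    have := congrArg (fun T : E →L[ℝ] E => T x) (Ring.mul_inverse_cancel _ hCu)
    simpa using this
  have hAv : A v = x := by
    have := congrArg (fun T : E →L[ℝ] E => T x) (Ring.mul_inverse_cancel _ hAu)
    simpa using this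
  set t : ℝ := ⟪Ring.inverse C x, x⟫ with ht
  set s : ℝ := ⟪Ring.inverse A x, x⟫ with hs
  have htnn : 0 ≤ t := ((isPositive_iff_real _).mp (sp_isPositive hCi)).2 x
  have hsnn : 0 ≤ s := ((isPositive_iff_real _).mp (sp_isPositive hAi)).2 x
  -- t = ⟪u, x⟫ = ⟪u, A v⟫ = ⟪A v, u⟫
  have hkey : t ^ 2 ≤ s * t := by
    have h1 : t = ⟪A v, u⟫ := by
      rw [ht, hAv]
      exact real_inner_comm _ _
    have hcs := pos_cauchy_schwarz hApos v u
    have h2 : ⟪A v, v⟫ = s := by rw [hs, hAv, ← hv]; exact real_inner_comm _ _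
    have h3 : ⟪A u, u⟫ ≤ ⟪C u, u⟫ := by
      have := ((isPositive_iff_real _).mp h).2 u
      simp only [ContinuousLinearMap.sub_apply, inner_sub_left] at this
      linarith
    have h4 : ⟪C u, u⟫ = t := by rw [ht, hCu']; exact real_inner_comm _ _
    have hAuu : 0 ≤ ⟪A u, u⟫ := ((isPositive_iff_real _).mp hApos).2 u
    calc t ^ 2 = ⟪A v, u⟫ ^ 2 := by rw [h1]
    _ ≤ ⟪A v, v⟫ * ⟪A u, u⟫ := hcs
    _ ≤ s * t := by rw [h2]; nlinarith
  have : t ≤ s := by nlinarith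
  simp only [ContinuousLinearMap.sub_apply, inner_sub_left]
  exact sub_nonneg.mpr this

lemma psi_pos (L : H →L[ℝ] G) (hL1 : ‖L‖ ≤ 1) :
    ((1 : G →L[ℝ] G) - L ∘L adjoint L).IsPositive := by
  refine (isPositive_iff_real _).mpr ⟨?_, fun x => ?_⟩
  · rw [IsSelfAdjoint, star_sub, star_one, star_eq_adjoint, adjoint_comp, adjoint_adjoint]
  · have h5 : ⟪x, L ((adjoint L) x)⟫ = ⟪(adjoint L) x, (adjoint L) x⟫ := by
      have := ContinuousLinearMap.adjoint_inner_right (adjoint L) x ((adjoint L) x)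
      rwa [ContinuousLinearMap.adjoint_adjoint] at this
    have h6 : ⟪(L ∘L adjoint L) x, x⟫ = ‖(adjoint L) x‖ ^ 2 := by
      rw [ContinuousLinearMap.comp_apply, real_inner_comm, h5, real_inner_self_eq_norm_sq]
    have h7 : ‖(adjoint L) x‖ ≤ ‖x‖ := by
      calc ‖(adjoint L) x‖ ≤ ‖adjoint L‖ * ‖x‖ := (adjoint L).le_opNorm x
      _ = ‖L‖ * ‖x‖ := by rw [ContinuousLinearMap.adjoint.norm_map]
      _ ≤ 1 * ‖x‖ := mul_le_mul_of_nonneg_right hL1 (norm_nonneg x)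
      _ = ‖x‖ := one_mul _
    simp only [ContinuousLinearMap.sub_apply, inner_sub_left, ContinuousLinearMap.one_apply,
      real_inner_self_eq_norm_sq, h6]
    nlinarith [norm_nonneg ((adjoint L) x), norm_nonneg x]

theorem rcc_scaling (L : H →L[ℝ] G) (hL0 : 0 < ‖L‖) (hL1 : ‖L‖ ≤ 1)
    (γ : ℝ) (hγ : 0 < γ) (ρ : ℝ) (hρ : 1 ≤ ρ)
    (B : G →L[ℝ] G) (hB : StrictlyPos B) :
    rcc L γ (ρ • B) = ρ • rcc L (γ * ρ) B ∧
      Loewner (rcc L γ (ρ • B)) (ρ • rcc L γ B) := by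
  have hρ0 : (0:ℝ) < ρ := lt_of_lt_of_le one_pos hρ
  have hρne : ρ ≠ 0 := ne_of_gt hρ0
  set Ψ : G →L[ℝ] G := (1 : G →L[ℝ] G) - L ∘L adjoint L with hΨdef
  have hΨ : Ψ.IsPositive := psi_pos L hL1
  have hBu : IsUnit B := sp_isUnit hB
  have hBisp : StrictlyPos (Ring.inverse B) := sp_ring_inverse hB
  set M₁ : G →L[ℝ] G := Ring.inverse B + γ • Ψ with hM₁def
  set M₂ : G →L[ℝ] G := Ring.inverse B + (γ * ρ) • Ψ with hM₂def
  have hM₁sp : StrictlyPos M₁ := sp_add_pos hBisp (isPositive_smul_real _ hγ.le hΨ)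
  have hM₂sp : StrictlyPos M₂ :=
    sp_add_pos hBisp (isPositive_smul_real _ (mul_nonneg hγ.le hρ0.le) hΨ)
  have hM₂u : IsUnit M₂ := sp_isUnit hM₂sp
  have hinv1 : Ring.inverse (ρ • B) = ρ⁻¹ • Ring.inverse B := by
    apply myRingInverseEq
    · rw [ContinuousLinearMap.mul_def, ContinuousLinearMap.smul_comp,
        ContinuousLinearMap.comp_smul, smul_smul, ← ContinuousLinearMap.mul_def,
        Ring.mul_inverse_cancel _ hBu, mul_inv_cancel₀ hρne, one_smul]
    · rw [ContinuousLinearMap.mul_def, ContinuousLinearMap.smul_comp,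
        ContinuousLinearMap.comp_smul, smul_smul, ← ContinuousLinearMap.mul_def,
        Ring.inverse_mul_cancel _ hBu, inv_mul_cancel₀ hρne, one_smul]
  have heq2 : Ring.inverse (ρ • B) + γ • Ψ = ρ⁻¹ • M₂ := by
    rw [hinv1, hM₂def, smul_add, smul_smul]
    congr 2
    field_simp
  have hinv2 : Ring.inverse (ρ⁻¹ • M₂) = ρ • Ring.inverse M₂ := by
    apply myRingInverseEq
    · rw [ContinuousLinearMap.mul_def, ContinuousLinearMap.smul_comp,
        ContinuousLinearMap.comp_smul, smul_smul, ← ContinuousLinearMap.mul_def,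
        Ring.mul_inverse_cancel _ hM₂u, inv_mul_cancel₀ hρne, one_smul]
    · rw [ContinuousLinearMap.mul_def, ContinuousLinearMap.smul_comp,
        ContinuousLinearMap.comp_smul, smul_smul, ← ContinuousLinearMap.mul_def,
        Ring.inverse_mul_cancel _ hM₂u, mul_inv_cancel₀ hρne, one_smul]
  have heq : rcc L γ (ρ • B) = ρ • rcc L (γ * ρ) B := by
    rw [rcc, rcc, ← hΨdef, heq2, hinv2, ← hM₂def]
    rw [ContinuousLinearMap.smul_comp, ContinuousLinearMap.comp_smul]
  refine ⟨heq, ?_⟩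
  rw [heq]
  -- Loewner (ρ • rcc L (γ*ρ) B) (ρ • rcc L γ B)
  rw [Loewner, ← smul_sub]
  apply isPositive_smul_real _ hρ0.le
  have hM₁₂ : Loewner M₁ M₂ := by
    rw [Loewner]
    have : M₂ - M₁ = (γ * ρ - γ) • Ψ := by
      rw [hM₁def, hM₂def, sub_smul]
      abel
    rw [this]
    exact isPositive_smul_real _ (by nlinarith) hΨ
  have hinvmono : (Ring.inverse M₁ - Ring.inverse M₂).IsPositive :=
    inv_anti hM₁sp hM₂sp hM₁₂
  have : rcc L γ B - rcc L (γ * ρ) B =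
      adjoint L ∘L (Ring.inverse M₁ - Ring.inverse M₂) ∘L L := by
    rw [rcc, rcc, ← hΨdef, ← hM₁def, ← hM₂def, ContinuousLinearMap.sub_comp,
      ContinuousLinearMap.comp_sub]
  rw [this]
  exact hinvmono.adjoint_conj L


end
end
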